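/- Let τ ≥ 3 and let 1 ≤ k < k' ≤ ⌊τ/2⌋. Then the polynomials h(x,y) = x^{τ-k} y^k and h'(x,y) = x^{τ-k'} y^{k'} are not equivalent: there is no A ∈ GL(2,ℝ) with h(A(x,y)) = h'(x,y) for all (x,y). -/
import Mathlib

theorem stmt_6 (τ k k' : ℕ) (hτ : 3 ≤ τ) (hk : 1 ≤ k) (hkk' : k < k') (hk' : k' ≤ τ / 2) :
    ¬ ∃ A : Matrix (Fin 2) (Fin 2) ℝ, IsUnit A.det ∧
      ∀ x y : ℝ,
        (A 0 0 * x + A 0 1 * y) ^ (τ - k) * (A 1 0 * x + A 1 1 * y) ^ k =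
          x ^ (τ - k') * y ^ k' := by
  rintro ⟨A, -, hA⟩
  have hkτ : k < τ := by omega
  have hτk : τ - k ≠ 0 := by omega
  have hk'0 : k' ≠ 0 := by omega
  have hτk' : τ - k' ≠ 0 := by omega
  have hkne : k ≠ 0 := by omega
  have h10 : A 0 0 ^ (τ - k) * A 1 0 ^ k = 0 := by
    have := hA 1 0
    simpa [zero_pow hk'0] using this
  have h01 : A 0 1 ^ (τ - k) * A 1 1 ^ k = 0 := by
    have := hA 0 1
    simpa [zero_pow hτk'] using this
  have inj2 : Function.Injective fun n : ℕ => (2 : ℕ) ^ n :=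
    Nat.pow_right_injective (le_refl 2)
  rcases mul_eq_zero.1 h10 with h | h
  · have hA00 : A 0 0 = 0 := pow_eq_zero_iff hτk |>.1 h
    rcases mul_eq_zero.1 h01 with h' | h'
    · have hA01 : A 0 1 = 0 := pow_eq_zero_iff hτk |>.1 h'
      have := hA 1 1
      rw [hA00, hA01] at this
      simp [zero_pow hτk] at this
    · have hA11 : A 1 1 = 0 := pow_eq_zero_iff hkne |>.1 h'
      have e1 := hA 1 1
      have e2 := hA 1 2
      rw [hA00, hA11] at e1 e2
      simp only [zero_mul, zero_add, add_zero, mul_one, one_pow, mul_zero] at e1 e2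
      have h2 : (2 : ℝ) ^ (τ - k) = 2 ^ k' := by
        linear_combination e2 - (2:ℝ) ^ (τ - k) * e1
      have h2' : (2 : ℕ) ^ (τ - k) = 2 ^ k' := by exact_mod_cast h2
      have := inj2 h2'
      omega
  · have hA10 : A 1 0 = 0 := pow_eq_zero_iff hkne |>.1 h
    rcases mul_eq_zero.1 h01 with h' | h'
    · have hA01 : A 0 1 = 0 := pow_eq_zero_iff hτk |>.1 h'
      have e1 := hA 1 1
      have e2 := hA 2 1
      rw [hA10, hA01] at e1 e2
      simp only [zero_mul, zero_add, add_zero, mul_one, one_pow, mul_zero] at e1 e2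
      have h2 : (2 : ℝ) ^ (τ - k) = 2 ^ (τ - k') := by
        linear_combination e2 - (2:ℝ) ^ (τ - k) * e1
      have h2' : (2 : ℕ) ^ (τ - k) = 2 ^ (τ - k') := by exact_mod_cast h2
      have := inj2 h2'
      omega
    · have hA11 : A 1 1 = 0 := pow_eq_zero_iff hkne |>.1 h'
      have := hA 1 1
      rw [hA10, hA11] at this
      simp [zero_pow hkne] at this
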